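/- For integers 0 < a < b, k ≥ 1, a real δ with 0 < δ < 1/2, and x ∈ (δ, 1-δ), one has |P(B_{k,x} mod b ∈ {0,1,...,a-1}) - a/b| ≤ (1 - x^b(1-x)^b)^{⌊k/b⌋}, where B_{k,x} is a binomial random variable with parameters (k,x). -/

import Mathlib

open Finset

noncomputable def stepf (b : ℕ) (x : ℝ) (p : ZMod b → ℝ) : ZMod b → ℝ :=
  fun y => (1 - x) * p y + x * p (y - 1)

lemma stepf_iterate (b : ℕ) (x : ℝ) (m : ℕ) (p : ZMod b → ℝ) (y : ZMod b) :
    (stepf b x)^[m] p y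
      = ∑ j ∈ range (m+1), (m.choose j : ℝ) * x^j * (1-x)^(m-j) * p (y - j) := by
  induction m generalizing y with
  | zero => simp [stepf]
  | succ m ih =>
    rw [Function.iterate_succ_apply', stepf]
    simp only [ih]
    have h1 : (1-x) * ∑ j ∈ range (m+1), (m.choose j : ℝ) * x^j * (1-x)^(m-j) * p (y - j)
        = ∑ j ∈ range (m+1), (m.choose j : ℝ) * x^j * (1-x)^(m+1-j) * p (y - j) := by
      rw [Finset.mul_sum]
      refine Finset.sum_congr rfl fun j hj => ?_
      have hj' : j ≤ m := by simpa [Nat.lt_succ_iff] using hj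
      have : (1-x) * (1-x)^(m-j) = (1-x)^(m+1-j) := by
        rw [← pow_succ']
        congr 1
        omega
      rw [← this]; ring
    have h2 : x * ∑ j ∈ range (m+1), (m.choose j:ℝ)*x^j*(1-x)^(m-j)*p (y - 1 - j)
        = ∑ j ∈ range (m+1), (m.choose j:ℝ)*x^(j+1)*(1-x)^(m-j)*p (y - ((j+1:ℕ))) := by
      rw [Finset.mul_sum]
      refine Finset.sum_congr rfl fun j hj => ?_
      have : y - 1 - (j:ZMod b) = y - ((j+1 : ℕ):ZMod b) := by push_cast; ring
      rw [this]; ring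
    have h3 : ∑ j ∈ range (m+1), (m.choose j : ℝ) * x^j * (1-x)^(m+1-j) * p (y - j)
        = (∑ j ∈ range m, (m.choose (j+1):ℝ)*x^(j+1)*(1-x)^(m-j)*p (y - ((j+1:ℕ))))
          + (1-x)^(m+1) * p y := by
      rw [Finset.sum_range_succ'
        (fun j => (m.choose j : ℝ) * x^j * (1-x)^(m+1-j) * p (y - j)) m]
      simp only [Nat.succ_sub_succ_eq_sub, Nat.choose_zero_right, Nat.cast_one, pow_zero,
        Nat.sub_zero, Nat.cast_zero, one_mul, mul_one]
      congr 1
      simp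
    have hsplit : ∑ j ∈ range (m+2), ((m+1).choose j : ℝ) * x^j * (1-x)^(m+1-j) * p (y - j)
        = (∑ j ∈ range (m+1), (m.choose j : ℝ) * x^(j+1) * (1-x)^(m-j) * p (y - ((j+1:ℕ))))
          + ((∑ j ∈ range m, (m.choose (j+1) : ℝ) * x^(j+1) * (1-x)^(m-j) * p (y - ((j+1:ℕ))))
             + (1-x)^(m+1) * p y) := by
      rw [Finset.sum_range_succ'
        (fun j => ((m+1).choose j : ℝ) * x^j * (1-x)^(m+1-j) * p (y - j)) (m+1)]
      have hterm : ∀ j ∈ range (m+1),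
          ((m+1).choose (j+1) : ℝ) * x^(j+1) * (1-x)^(m+1-(j+1)) * p (y - ((j+1:ℕ)))
          = (m.choose j : ℝ) * x^(j+1) * (1-x)^(m-j) * p (y - ((j+1:ℕ)))
            + (m.choose (j+1) : ℝ) * x^(j+1) * (1-x)^(m-j) * p (y - ((j+1:ℕ))) := by
        intro j hj
        rw [Nat.choose_succ_succ]
        push_cast
        simp only [Nat.succ_eq_add_one]
        ring
      rw [Finset.sum_congr rfl hterm, Finset.sum_add_distrib]
      have hz : ∑ j ∈ range (m+1), (m.choose (j+1):ℝ) * x^(j+1)*(1-x)^(m-j)*p (y-((j+1:ℕ)))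
          = ∑ j ∈ range m, (m.choose (j+1):ℝ) * x^(j+1)*(1-x)^(m-j)*p (y-((j+1:ℕ))) := by
        rw [Finset.sum_range_succ]
        simp
      rw [hz]
      simp
      ring
    rw [h1, h2, h3, hsplit]
    ring

lemma sum_zmod {b : ℕ} [NeZero b] (f : ZMod b → ℝ) :
    ∑ u : ZMod b, f u = ∑ j ∈ range b, f (j : ZMod b) := by
  refine Finset.sum_nbij' (fun u => u.val) (fun j => (j : ZMod b)) ?_ ?_ ?_ ?_ ?_
  · intro u _; exact Finset.mem_range.mpr (ZMod.val_lt u)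
  · intro j _; exact Finset.mem_univ _
  · intro u _; exact ZMod.natCast_rightInverse u
  · intro j hj; exact ZMod.val_cast_of_lt (Finset.mem_range.mp hj)
  · intro u _; rw [ZMod.natCast_rightInverse u]

lemma stepf_sum {b : ℕ} [NeZero b] (x : ℝ) (p : ZMod b → ℝ) :
    ∑ y : ZMod b, stepf b x p y = ∑ y : ZMod b, p y := by
  unfold stepf
  rw [Finset.sum_add_distrib, ← Finset.mul_sum, ← Finset.mul_sum]
  have : ∑ y : ZMod b, p (y - 1) = ∑ y : ZMod b, p y :=
    Equiv.sum_comp (Equiv.subRight (1 : ZMod b)) p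
  rw [this]; ring

lemma stepf_iter_sum {b : ℕ} [NeZero b] (x : ℝ) (m : ℕ) (p : ZMod b → ℝ) :
    ∑ y : ZMod b, (stepf b x)^[m] p y = ∑ y : ZMod b, p y := by
  induction m with
  | zero => simp
  | succ m ih => rw [Function.iterate_succ_apply', stepf_sum, ih]

lemma stepf_iter_nonneg {b : ℕ} (x : ℝ) (hx0 : 0 ≤ x) (hx1 : x ≤ 1) (m : ℕ)
    (p : ZMod b → ℝ) (hp : ∀ y, 0 ≤ p y) : ∀ y, 0 ≤ (stepf b x)^[m] p y := by
  induction m with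
  | zero => simpa
  | succ m ih =>
    intro y
    rw [Function.iterate_succ_apply', stepf]
    have h1 : (0:ℝ) ≤ 1 - x := by linarith
    exact add_nonneg (mul_nonneg h1 (ih y)) (mul_nonneg hx0 (ih _))

lemma weight_ge {b : ℕ} (x : ℝ) (hx0 : 0 < x) (hx1 : x < 1) {j : ℕ} (hj : j ≤ b) :
    x^b * (1-x)^b ≤ (b.choose j : ℝ) * x^j * (1-x)^(b-j) := by
  have h1x : (0:ℝ) < 1 - x := by linarith
  have e1 : x^b = x^j * x^(b-j) := by rw [← pow_add]; congr 1; omega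
  have e2 : (1-x)^b = (1-x)^(b-j) * (1-x)^j := by rw [← pow_add]; congr 1; omega
  have hch : (1:ℝ) ≤ (b.choose j : ℝ) := by
    exact_mod_cast Nat.one_le_iff_ne_zero.mpr (Nat.choose_pos hj).ne'
  have hxj : x^(b-j) ≤ 1 := pow_le_one₀ hx0.le hx1.le
  have hyj : (1-x)^j ≤ 1 := pow_le_one₀ h1x.le (by linarith)
  have hpos1 : (0:ℝ) ≤ x^j * (1-x)^(b-j) := by positivity
  calc x^b * (1-x)^b = (x^j * (1-x)^(b-j)) * (x^(b-j) * (1-x)^j) := by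
        rw [e1, e2]; ring
    _ ≤ (x^j * (1-x)^(b-j)) * 1 := by
        apply mul_le_mul_of_nonneg_left _ hpos1
        exact mul_le_one₀ hxj (by positivity) hyj
    _ = x^j * (1-x)^(b-j) := by ring
    _ ≤ (b.choose j : ℝ) * x^j * (1-x)^(b-j) := by
        have := mul_le_mul_of_nonneg_right hch hpos1
        linarith [this]

lemma bc_lt_one {b : ℕ} (hb : 2 ≤ b) (x : ℝ) (hx0 : 0 < x) (hx1 : x < 1) :
    (b:ℝ) * (x^b * (1-x)^b) < 1 := by
  have h1x : (0:ℝ) < 1 - x := by linarith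
  have hq : x * (1-x) ≤ 1/4 := by nlinarith [sq_nonneg (x - 1/2)]
  have hc : x^b * (1-x)^b ≤ (1/4)^b := by
    rw [← mul_pow]
    exact pow_le_pow_left₀ (by positivity) hq b
  have h4 : (b:ℝ) < 4^b := by
    exact_mod_cast (Nat.lt_pow_self (by norm_num : 1 < 4) : b < 4 ^ b)
  have h4p : (0:ℝ) < (4:ℝ)^b := by positivity
  have key : (b:ℝ) * (1/4)^b < 1 := by
    have e : (b:ℝ) * (1/4)^b = b / 4^b := by rw [div_pow]; ring
    rw [e, div_lt_one h4p]; exact h4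
  have hb0 : (0:ℝ) ≤ b := Nat.cast_nonneg b
  nlinarith [mul_le_mul_of_nonneg_left hc hb0]

lemma wsum (b : ℕ) (x : ℝ) :
    ∑ j ∈ range (b+1), (b.choose j:ℝ)*x^j*(1-x)^(b-j) = 1 := by
  have h := add_pow x (1-x) b
  have h1 : x + (1-x) = 1 := by ring
  rw [h1, one_pow] at h
  have h2 : ∑ j ∈ range (b+1), (b.choose j:ℝ)*x^j*(1-x)^(b-j)
      = ∑ m ∈ range (b+1), x^m*(1-x)^(b-m)*(b.choose m:ℝ) :=
    Finset.sum_congr rfl fun j _ => by ring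
  rw [h2, ← h]

lemma block {b : ℕ} [NeZero b] (hb : 2 ≤ b) (x : ℝ) (hx0 : 0 < x) (hx1 : x < 1)
    (σ : ZMod b → ℝ) (hσ0 : ∀ y, 0 ≤ σ y) (hσ1 : ∑ y : ZMod b, σ y = 1) :
    ∃ σ' : ZMod b → ℝ, (∀ y, 0 ≤ σ' y) ∧ (∑ y : ZMod b, σ' y = 1) ∧
      ∀ y, (stepf b x)^[b] σ y
        = x^b*(1-x)^b + (1 - b*(x^b*(1-x)^b)) * σ' y := by
  have h1x : (0:ℝ) < 1 - x := by linarith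
  set c := x^b*(1-x)^b with hc
  set t := 1 - (b:ℝ)*c with htdef
  have hbc : (b:ℝ)*c < 1 := bc_lt_one hb x hx0 hx1
  have hc0 : 0 < c := by positivity
  have ht0 : 0 < t := by simp only [htdef]; linarith
  have hlow : ∀ y, c ≤ (stepf b x)^[b] σ y := by
    intro y
    rw [stepf_iterate]
    have hdrop : ∑ j ∈ range b, (b.choose j:ℝ)*x^j*(1-x)^(b-j)*σ (y - (j:ℕ))
        ≤ ∑ j ∈ range (b+1), (b.choose j:ℝ)*x^j*(1-x)^(b-j)*σ (y - (j:ℕ)) := by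
      rw [Finset.sum_range_succ]
      have hlast : (0:ℝ) ≤ (b.choose b:ℝ)*x^b*(1-x)^(b-b)*σ (y - (b:ℕ)) := by
        have := hσ0 (y - (b:ℕ)); positivity
      linarith
    have h2 : c * (∑ j ∈ range b, σ (y - (j:ℕ)))
        ≤ ∑ j ∈ range b, (b.choose j:ℝ)*x^j*(1-x)^(b-j)*σ (y - (j:ℕ)) := by
      rw [Finset.mul_sum]
      apply Finset.sum_le_sum
      intro j hj
      exact mul_le_mul_of_nonneg_right
        (weight_ge x hx0 hx1 (Finset.mem_range.mp hj).le) (hσ0 _)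
    have h3 : ∑ j ∈ range b, σ (y - (j:ℕ)) = 1 := by
      have he := Equiv.sum_comp (Equiv.subLeft y) σ
      simp only [Equiv.subLeft_apply] at he
      rw [← sum_zmod (fun u => σ (y - u)), he, hσ1]
    nlinarith [h2, h3, hdrop]
  refine ⟨fun y => ((stepf b x)^[b] σ y - c)/t, ?_, ?_, ?_⟩
  · intro y
    exact div_nonneg (by linarith [hlow y]) ht0.le
  · rw [← Finset.sum_div, Finset.sum_sub_distrib, stepf_iter_sum, hσ1,
      Finset.sum_const, Finset.card_univ, ZMod.card, nsmul_eq_mul]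
    rw [← htdef, div_self ht0.ne']
  · intro y
    rw [mul_div_cancel₀ _ ht0.ne']
    ring

lemma invariant {b : ℕ} [NeZero b] (hb : 2 ≤ b) (x : ℝ) (hx0 : 0 < x) (hx1 : x < 1)
    (m : ℕ) (p : ZMod b → ℝ) (hp0 : ∀ y, 0 ≤ p y) (hp1 : ∑ y : ZMod b, p y = 1) :
    ∃ σ : ZMod b → ℝ, (∀ y, 0 ≤ σ y) ∧ (∑ y : ZMod b, σ y = 1) ∧
      ∀ y, (stepf b x)^[m*b] p y
        = (1 - (1 - b*(x^b*(1-x)^b))^m)/b + (1 - b*(x^b*(1-x)^b))^m * σ y := by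
  set c := x^b*(1-x)^b with hc
  set t := 1 - (b:ℝ)*c with htdef
  have hb0 : (0:ℝ) < b := by positivity
  induction m with
  | zero =>
    exact ⟨p, hp0, hp1, fun y => by simp⟩
  | succ m ih =>
    obtain ⟨σ, hσ0, hσ1, hσe⟩ := ih
    obtain ⟨σ', hσ'0, hσ'1, hσ'e⟩ := block hb x hx0 hx1 σ hσ0 hσ1
    refine ⟨σ', hσ'0, hσ'1, fun y => ?_⟩
    have hidx : (m+1)*b = b + m*b := by ring
    rw [hidx, Function.iterate_add_apply]
    rw [stepf_iterate]
    have hterm : ∀ j ∈ range (b+1),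
        (b.choose j:ℝ)*x^j*(1-x)^(b-j) * ((stepf b x)^[m*b] p (y - (j:ℕ)))
        = (b.choose j:ℝ)*x^j*(1-x)^(b-j) * ((1 - t^m)/b)
          + t^m * ((b.choose j:ℝ)*x^j*(1-x)^(b-j) * σ (y - (j:ℕ))) := by
      intro j hj
      rw [hσe]
      ring
    rw [Finset.sum_congr rfl hterm, Finset.sum_add_distrib, ← Finset.sum_mul,
      ← Finset.mul_sum, wsum b x]
    have hblk : ∑ j ∈ range (b+1), (b.choose j:ℝ)*x^j*(1-x)^(b-j) * σ (y - (j:ℕ))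
        = c + t * σ' y := by
      rw [← stepf_iterate, hσ'e y]
    rw [hblk]
    have hcb : c = (1 - t)/b := by
      rw [htdef]; field_simp; ring
    rw [hcb]
    field_simp
    ring

theorem stmt_3 (a b k : ℕ) (ha : 0 < a) (hab : a < b) (hk : 1 ≤ k)
    (δ : ℝ) (hδ : 0 < δ) (hδ' : δ < 1/2) (x : ℝ) (hx : x ∈ Set.Ioo δ (1-δ)) :
    |(∑ i ∈ (Finset.range (k+1)).filter (fun i => i % b < a),
        (k.choose i : ℝ) * x^i * (1-x)^(k-i)) - a/b|
      ≤ (1 - x^b * (1-x)^b) ^ (k / b) := by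
  obtain ⟨hδx, hx1δ⟩ := hx
  have hx0 : 0 < x := lt_trans hδ hδx
  have hx1 : x < 1 := by linarith
  have hb2 : 2 ≤ b := by omega
  haveI : NeZero b := ⟨by omega⟩
  have h1x : (0:ℝ) < 1 - x := by linarith
  set c := x^b * (1-x)^b with hc
  set t := 1 - (b:ℝ)*c with htdef
  have hbc : (b:ℝ)*c < 1 := bc_lt_one hb2 x hx0 hx1
  have hc0 : 0 < c := by positivity
  have ht0 : 0 < t := by simp only [htdef]; linarith
  have hb0R : (0:ℝ) < b := by positivity
  have hb1R : (1:ℝ) ≤ b := by exact_mod_cast hb2.trans' (by norm_num)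
  set p0 : ZMod b → ℝ := fun y => if y = 0 then 1 else 0 with hp0def
  have hp00 : ∀ y, 0 ≤ p0 y := fun y => by
    by_cases h : y = 0 <;> simp [hp0def, h]
  have hp01 : ∑ y : ZMod b, p0 y = 1 := by simp [hp0def]
  have hkqr : k = k / b * b + k % b := by
    rw [Nat.mul_comm (k/b) b]; exact (Nat.div_add_mod k b).symm
  have hp10 : ∀ y, 0 ≤ (stepf b x)^[k % b] p0 y :=
    stepf_iter_nonneg x hx0.le hx1.le (k % b) p0 hp00
  have hp11 : ∑ y : ZMod b, (stepf b x)^[k % b] p0 y = 1 := by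
    rw [stepf_iter_sum, hp01]
  obtain ⟨σ, hσ0, hσ1, hσe⟩ :=
    invariant hb2 x hx0 hx1 (k / b) ((stepf b x)^[k % b] p0) hp10 hp11
  set A : Finset (ZMod b) := Finset.univ.filter (fun y => y.val < a) with hA
  -- identify the LHS sum
  have step1 : ∑ y ∈ A, (stepf b x)^[k] p0 y
      = ∑ j ∈ range (k+1), ∑ y ∈ A,
          (if y = ((j:ℕ):ZMod b) then (k.choose j:ℝ)*x^j*(1-x)^(k-j) else 0) := by
    rw [Finset.sum_comm]
    refine Finset.sum_congr rfl fun y hy => ?_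
    rw [stepf_iterate]
    refine Finset.sum_congr rfl fun j hj => ?_
    by_cases h : y = ((j:ℕ) : ZMod b)
    · have : y - (j:ℕ) = 0 := by rw [sub_eq_zero, h]
      simp [hp0def, this, h]
    · have : ¬ (y - (j:ℕ) = 0) := by rw [sub_eq_zero]; exact h
      simp [hp0def, this, h]
  have step2 : ∀ j : ℕ, (∑ y ∈ A,
        (if y = ((j:ℕ):ZMod b) then (k.choose j:ℝ)*x^j*(1-x)^(k-j) else 0))
      = if j % b < a then (k.choose j:ℝ)*x^j*(1-x)^(k-j) else 0 := by
    intro j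
    rw [Finset.sum_ite_eq' A ((j:ℕ):ZMod b) (fun _ => (k.choose j:ℝ)*x^j*(1-x)^(k-j))]
    by_cases hcase : j % b < a
    · have hm : ((j:ℕ):ZMod b) ∈ A := by simp [hA, ZMod.val_natCast, hcase]
      rw [if_pos hm, if_pos hcase]
    · have hm : ((j:ℕ):ZMod b) ∉ A := by simp [hA, ZMod.val_natCast, hcase]
      rw [if_neg hm, if_neg hcase]
  have hLHS : (∑ i ∈ (Finset.range (k+1)).filter (fun i => i % b < a),
        (k.choose i : ℝ) * x^i * (1-x)^(k-i)) = ∑ y ∈ A, (stepf b x)^[k] p0 y := by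
    rw [Finset.sum_filter, step1]
    exact Finset.sum_congr rfl fun j _ => (step2 j).symm
  -- cardinality of A
  have hcard : A.card = a := by
    have : A.card = (range a).card :=
      Finset.card_nbij' (fun y => y.val) (fun j => ((j:ℕ) : ZMod b))
        (fun y hy => by
          exact Finset.mem_range.mpr (Finset.mem_filter.mp hy).2)
        (fun j hj => by
          have hj' : j < a := Finset.mem_range.mp hj
          simp [hA, ZMod.val_natCast, Nat.mod_eq_of_lt (hj'.trans hab), hj'])
        (fun y hy => ZMod.natCast_rightInverse y)
        (fun j hj => ZMod.val_cast_of_lt ((Finset.mem_range.mp hj).trans hab))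
    rw [this, Finset.card_range]
  -- split the sum over A
  have hsplit : ∑ y ∈ A, (stepf b x)^[k] p0 y
      = a * ((1 - t^(k/b))/b) + t^(k/b) * ∑ y ∈ A, σ y := by
    have hterm : ∀ y ∈ A, (stepf b x)^[k] p0 y = (1 - t^(k/b))/b + t^(k/b) * σ y := by
      intro y _
      have h := hσe y
      rw [← Function.iterate_add_apply] at h
      rw [← hkqr] at h
      exact h
    rw [Finset.sum_congr rfl hterm, Finset.sum_add_distrib, ← Finset.mul_sum,
      Finset.sum_const, hcard, nsmul_eq_mul]
  have hS0 : 0 ≤ ∑ y ∈ A, σ y := Finset.sum_nonneg fun y _ => hσ0 y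
  have hS1 : ∑ y ∈ A, σ y ≤ 1 := by
    rw [← hσ1]
    exact Finset.sum_le_sum_of_subset_of_nonneg (Finset.subset_univ A)
      (fun y _ _ => hσ0 y)
  have habR : (a:ℝ) ≤ b := by exact_mod_cast hab.le
  have ha0R : (0:ℝ) ≤ a := Nat.cast_nonneg a
  rw [hLHS, hsplit]
  have expr : (a:ℝ) * ((1 - t^(k/b))/b) + t^(k/b) * (∑ y ∈ A, σ y) - a/b
      = t^(k/b) * ((∑ y ∈ A, σ y) - a/b) := by
    field_simp
    ring
  rw [expr, abs_mul, abs_of_nonneg (pow_nonneg ht0.le (k/b))]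
  have habdiv : (a:ℝ)/b ≤ 1 := by rw [div_le_one hb0R]; exact habR
  have habdiv0 : (0:ℝ) ≤ (a:ℝ)/b := by positivity
  have h1 : |(∑ y ∈ A, σ y) - a/b| ≤ 1 := by
    rw [abs_le]
    constructor <;> linarith
  have h2 : t^(k/b) ≤ (1-c)^(k/b) := by
    apply fun h => pow_le_pow_left₀ ht0.le h (k/b)
    simp only [htdef]
    nlinarith
  calc t^(k/b) * |(∑ y ∈ A, σ y) - a/b| ≤ t^(k/b) * 1 :=
        mul_le_mul_of_nonneg_left h1 (pow_nonneg ht0.le (k/b))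
    _ = t^(k/b) := mul_one _
    _ ≤ (1-c)^(k/b) := h2
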